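/- The commutator subgroup [T,T] of the group T is isomorphic to the quaternion group Q₈ of order eight. -/

import Mathlib

/-- The translations of the conjugation quandle of the conjugacy class of `(1 2 3)` in `A₄`,
written on `Fin 4` (0-indexed): `φ₁ = (2 4 3)`, `φ₂ = (1 3 4)`, `φ₃ = (1 4 2)`, `φ₄ = (1 2 3)`. -/
def phiA4 : Fin 4 → Fin 4 → Fin 4 :=
  ![![0, 3, 1, 2], ![2, 1, 3, 0], ![3, 0, 2, 1], ![1, 2, 0, 3]]

/-- The defining relations of the group `⟨x₁,…,x₄ ∣ xᵢxⱼ = x_{φᵢ(j)}xᵢ⟩`. -/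
def TRels : Set (FreeGroup (Fin 4)) :=
  {r | ∃ i j : Fin 4,
    r = FreeGroup.of i * FreeGroup.of j * (FreeGroup.of i)⁻¹ * (FreeGroup.of (phiA4 i j))⁻¹}

/-- The group `T = ⟨z⟩ × ⟨x₁,…,x₄ ∣ xᵢxⱼ = x_{φᵢ(j)}xᵢ⟩` with `⟨z⟩` infinite cyclic. -/
def TGroup : Type := Multiplicative ℤ × PresentedGroup TRels

instance : Group TGroup := inferInstanceAs (Group (Multiplicative ℤ × PresentedGroup TRels))

set_option linter.unreachableTactic false
set_option linter.unusedTactic false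

namespace Aux19

open scoped commutatorElement

abbrev Q : Type := QuaternionGroup 2
abbrev G : Type := PresentedGroup TRels

def x (i : Fin 4) : G := PresentedGroup.of i

lemma relone (i j : Fin 4) :
    x i * x j * (x i)⁻¹ * (x (phiA4 i j))⁻¹ = 1 := by
  have h : (FreeGroup.of i * FreeGroup.of j * (FreeGroup.of i)⁻¹ *
      (FreeGroup.of (phiA4 i j))⁻¹) ∈ Subgroup.normalClosure TRels :=
    Subgroup.subset_normalClosure ⟨i, j, rfl⟩
  have := (QuotientGroup.eq_one_iff (N := Subgroup.normalClosure TRels)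
      (FreeGroup.of i * FreeGroup.of j * (FreeGroup.of i)⁻¹ *
      (FreeGroup.of (phiA4 i j))⁻¹)).mpr h
  exact this

lemma xswap (i j k : Fin 4) (h : phiA4 i j = k) : x i * x j = x k * x i := by
  have h1 := relone i j
  rw [h] at h1
  have h2 : x i * x j * (x i)⁻¹ = x k := by
    have := mul_eq_one_iff_eq_inv.mp h1
    simpa using this
  rw [← h2]; group

lemma xswapInv (i j k : Fin 4) (h : phiA4 i j = k) :
    (x i)⁻¹ * x k = x j * (x i)⁻¹ := by
  have h1 := xswap i j k h
  calc (x i)⁻¹ * x k = (x i)⁻¹ * (x k * x i) * (x i)⁻¹ := by group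
    _ = (x i)⁻¹ * (x i * x j) * (x i)⁻¹ := by rw [← h1]
    _ = x j * (x i)⁻¹ := by group

/-- rewrite helper: `a * b = c * d` gives right-assoc version. -/
lemma hw {M : Type*} [Group M] {a b c d : M} (h : a * b = c * d) (t : M) :
    a * (b * t) = c * (d * t) := by rw [← mul_assoc, h, mul_assoc]

def I : G := x 0 * (x 3)⁻¹
def J : G := x 1 * (x 3)⁻¹

lemma h20 : (x 3)⁻¹ * x 0 = x 2 * (x 3)⁻¹ := xswapInv 3 2 0 (by decide)
lemma h12 : (x 3)⁻¹ * x 2 = x 1 * (x 3)⁻¹ := xswapInv 3 1 2 (by decide)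
lemma h01 : (x 3)⁻¹ * x 1 = x 0 * (x 3)⁻¹ := xswapInv 3 0 1 (by decide)

lemma key1 : x 0 * (x 0 * x 1) = x 1 * (x 3 * x 3) := by
  have k13 : x 1 * x 3 = x 0 * x 1 := xswap 1 3 0 (by decide)
  calc x 0 * (x 0 * x 1)
      = x 0 * (x 1 * x 3) := by rw [k13]
    _ = (x 0 * x 1) * x 3 := by group
    _ = (x 1 * x 3) * x 3 := by rw [← k13]
    _ = x 1 * (x 3 * x 3) := by group

lemma key2 : x 0 * (x 0 * ((x 3)⁻¹ * ((x 3)⁻¹ * x 0))) = x 1 := by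
  calc x 0 * (x 0 * ((x 3)⁻¹ * ((x 3)⁻¹ * x 0)))
      = x 0 * (x 0 * ((x 3)⁻¹ * (x 2 * (x 3)⁻¹))) := by rw [h20]
    _ = x 0 * (x 0 * (((x 3)⁻¹ * x 2) * (x 3)⁻¹)) := by group
    _ = x 0 * (x 0 * ((x 1 * (x 3)⁻¹) * (x 3)⁻¹)) := by rw [h12]
    _ = (x 0 * (x 0 * x 1)) * ((x 3)⁻¹ * (x 3)⁻¹) := by group
    _ = (x 1 * (x 3 * x 3)) * ((x 3)⁻¹ * (x 3)⁻¹) := by rw [key1]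
    _ = x 1 := by group

lemma S1 : I * J = J * I⁻¹ := by
  have lhs : I * J = x 0 * (x 0 * ((x 3)⁻¹ * (x 3)⁻¹)) := by
    unfold I J
    calc x 0 * (x 3)⁻¹ * (x 1 * (x 3)⁻¹)
        = x 0 * (((x 3)⁻¹ * x 1) * (x 3)⁻¹) := by group
      _ = x 0 * ((x 0 * (x 3)⁻¹) * (x 3)⁻¹) := by rw [h01]
      _ = x 0 * (x 0 * ((x 3)⁻¹ * (x 3)⁻¹)) := by group
  have rhs : J * I⁻¹ = x 1 * (x 0)⁻¹ := by unfold I J; group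
  rw [lhs, rhs]
  calc x 0 * (x 0 * ((x 3)⁻¹ * (x 3)⁻¹))
      = (x 0 * (x 0 * ((x 3)⁻¹ * ((x 3)⁻¹ * x 0)))) * (x 0)⁻¹ := by group
    _ = x 1 * (x 0)⁻¹ := by rw [key2]

lemma J2 : J * J = I * I := by
  unfold I J
  calc x 1 * (x 3)⁻¹ * (x 1 * (x 3)⁻¹)
      = x 1 * (((x 3)⁻¹ * x 1) * (x 3)⁻¹) := by group
    _ = x 1 * ((x 0 * (x 3)⁻¹) * (x 3)⁻¹) := by rw [h01]
    _ = (x 1 * x 0) * ((x 3)⁻¹ * (x 3)⁻¹) := by group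
    _ = (x 0 * x 2) * ((x 3)⁻¹ * (x 3)⁻¹) := by rw [← xswap 0 2 1 (by decide)]
    _ = x 0 * (x 2 * ((x 3)⁻¹ * (x 3)⁻¹)) := by group
    _ = x 0 * ((x 3)⁻¹ * (x 0 * (x 3)⁻¹)) := by rw [hw h20.symm]
    _ = x 0 * (x 3)⁻¹ * (x 0 * (x 3)⁻¹) := by group

lemma I4 : I * I * (I * I) = 1 := by
  have h1 : I * (I * J) = J⁻¹ := by
    calc I * (I * J) = I * (J * I⁻¹) := by rw [S1]
      _ = (I * J) * I⁻¹ := by group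
      _ = (J * I⁻¹) * I⁻¹ := by rw [S1]
      _ = J * (I * I)⁻¹ := by group
      _ = J * (J * J)⁻¹ := by rw [J2]
      _ = J⁻¹ := by group
  have h2 : I * I = (J * J)⁻¹ := by
    have := h1
    calc I * I = (I * (I * J)) * J⁻¹ := by group
      _ = J⁻¹ * J⁻¹ := by rw [h1]
      _ = (J * J)⁻¹ := by group
  calc I * I * (I * I) = I * I * (J * J)⁻¹ := by rw [h2]
    _ = I * I * (I * I)⁻¹ := by rw [J2]
    _ = 1 := by group

lemma Ipow4 : I ^ 4 = 1 := by
  calc I ^ 4 = I * I * (I * I) := by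
        rw [pow_succ, pow_succ, pow_succ, pow_one]; group
    _ = 1 := I4

lemma Iinv : I⁻¹ = I ^ 3 := by
  calc I⁻¹ = (I ^ 4)⁻¹ * I ^ 3 := by group
    _ = 1⁻¹ * I ^ 3 := by rw [Ipow4]
    _ = I ^ 3 := by group


lemma K' : J * I = x 2 * (x 3)⁻¹ := by
  have c31 : x 3 * x 1 = x 2 * x 3 := xswap 3 1 2 (by decide)
  have h1 : J * I = (x 1 * x 2) * ((x 3)⁻¹ * (x 3)⁻¹) := by
    unfold I J
    calc x 1 * (x 3)⁻¹ * (x 0 * (x 3)⁻¹)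
        = x 1 * (((x 3)⁻¹ * x 0) * (x 3)⁻¹) := by group
      _ = x 1 * ((x 2 * (x 3)⁻¹) * (x 3)⁻¹) := by rw [h20]
      _ = (x 1 * x 2) * ((x 3)⁻¹ * (x 3)⁻¹) := by group
  have h2 : x 1 * x 2 = x 3 * x 1 := xswap 1 2 3 (by decide)
  rw [h1, h2, c31]
  group

lemma C1 : x 3 * I * (x 3)⁻¹ = J := by
  unfold I J
  calc x 3 * (x 0 * (x 3)⁻¹) * (x 3)⁻¹
      = (x 3 * x 0) * ((x 3)⁻¹ * (x 3)⁻¹) := by group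
    _ = (x 1 * x 3) * ((x 3)⁻¹ * (x 3)⁻¹) := by rw [xswap 3 0 1 (by decide)]
    _ = x 1 * (x 3)⁻¹ := by group

lemma C2 : x 3 * J * (x 3)⁻¹ = J * I := by
  rw [K']
  unfold J
  calc x 3 * (x 1 * (x 3)⁻¹) * (x 3)⁻¹
      = (x 3 * x 1) * ((x 3)⁻¹ * (x 3)⁻¹) := by group
    _ = (x 2 * x 3) * ((x 3)⁻¹ * (x 3)⁻¹) := by rw [xswap 3 1 2 (by decide)]
    _ = x 2 * (x 3)⁻¹ := by group

lemma powmod4 (m : ℕ) : I ^ m = I ^ (m % 4) := by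
  conv_lhs => rw [← Nat.div_add_mod m 4]
  rw [pow_add, pow_mul, Ipow4, one_pow, one_mul]

lemma powmod {m n : ℕ} (h : m % 4 = n % 4) : I ^ m = I ^ n := by
  rw [powmod4 m, powmod4 n, h]

lemma powswap : ∀ n : ℕ, I ^ n * J = J * I ^ (3 * n) := by
  intro n
  induction n with
  | zero => simp
  | succ n ih =>
    calc I ^ (n + 1) * J = I ^ n * (I * J) := by rw [pow_succ]; group
      _ = I ^ n * (J * I⁻¹) := by rw [S1]
      _ = (I ^ n * J) * I⁻¹ := by group
      _ = (J * I ^ (3 * n)) * I⁻¹ := by rw [ih]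
      _ = J * (I ^ (3 * n) * I ^ 3) := by rw [Iinv]; group
      _ = J * I ^ (3 * n + 3) := by rw [pow_add]
      _ = J * I ^ (3 * (n + 1)) := by ring_nf

def gf : Q → G
  | QuaternionGroup.a i => I ^ i.val
  | QuaternionGroup.xa i => J * I ^ i.val

def gQ : Q →* G where
  toFun := gf
  map_one' := by
    rw [QuaternionGroup.one_def]
    show I ^ (0 : ZMod (2 * 2)).val = 1
    norm_num
  map_mul' := by
    rintro (i | i) (j | j)
    · rw [QuaternionGroup.a_mul_a]
      show I ^ (i + j).val = I ^ i.val * I ^ j.val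
      rw [← pow_add]
      exact powmod (by revert i j; decide)
    · rw [QuaternionGroup.a_mul_xa]
      show J * I ^ (j - i).val = I ^ i.val * (J * I ^ j.val)
      calc J * I ^ (j - i).val
          = J * I ^ (3 * i.val + j.val) := by
            rw [powmod (m := (j - i).val) (n := 3 * i.val + j.val) (by revert i j; decide)]
        _ = (J * I ^ (3 * i.val)) * I ^ j.val := by rw [pow_add]; group
        _ = (I ^ i.val * J) * I ^ j.val := by rw [← powswap]
        _ = I ^ i.val * (J * I ^ j.val) := by group
    · rw [QuaternionGroup.xa_mul_a]
      show J * I ^ (i + j).val = (J * I ^ i.val) * I ^ j.val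
      rw [mul_assoc, ← pow_add]
      congr 1
      exact powmod (by revert i j; decide)
    · rw [QuaternionGroup.xa_mul_xa]
      show I ^ ((2 : ZMod (2 * 2)) + j - i).val = (J * I ^ i.val) * (J * I ^ j.val)
      calc I ^ ((2 : ZMod (2 * 2)) + j - i).val
          = I ^ (2 + (3 * i.val + j.val)) := by
            exact powmod (by revert i j; decide)
        _ = (I * I) * I ^ (3 * i.val + j.val) := by rw [pow_add, pow_two]
        _ = (J * J) * (I ^ (3 * i.val) * I ^ j.val) := by rw [J2, pow_add]
        _ = J * ((J * I ^ (3 * i.val)) * I ^ j.val) := by group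
        _ = J * ((I ^ i.val * J) * I ^ j.val) := by rw [← powswap]
        _ = (J * I ^ i.val) * (J * I ^ j.val) := by group


open QuaternionGroup in
def sf : Q → Q
  | QuaternionGroup.a i => (xa 0) ^ i.val
  | QuaternionGroup.xa i => xa 1 * (xa 0) ^ i.val

open QuaternionGroup in
def sfinv : Q → Q
  | QuaternionGroup.a i => (xa 1) ^ i.val
  | QuaternionGroup.xa i => a 1 * (xa 1) ^ i.val

lemma sf_hom : ∀ a b : Q, sf (a * b) = sf a * sf b := by decide
lemma sf_sfinv : ∀ a : Q, sf (sfinv a) = a := by decide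
lemma sfinv_sf : ∀ a : Q, sfinv (sf a) = a := by decide
lemma sf_inv : ∀ a : Q, sf a⁻¹ = (sf a)⁻¹ := by decide

def σA : MulAut Q :=
  { toFun := sf, invFun := sfinv, left_inv := sfinv_sf, right_inv := sf_sfinv,
    map_mul' := sf_hom }

def φσ : Multiplicative ℤ →* MulAut Q where
  toFun m := σA ^ (Multiplicative.toAdd m)
  map_one' := by simp
  map_mul' a b := by simp [zpow_add]

abbrev H : Type := SemidirectProduct Q (Multiplicative ℤ) φσ

def t : Multiplicative ℤ := Multiplicative.ofAdd 1

@[simp] lemma φσ_t (q : Q) : φσ t q = sf q := by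
  show (σA ^ Multiplicative.toAdd (Multiplicative.ofAdd (1:ℤ))) q = sf q
  simp only [toAdd_ofAdd, zpow_one]
  rfl

@[simp] lemma φσ_tinv (q : Q) : φσ t⁻¹ q = sfinv q := by
  show (σA ^ Multiplicative.toAdd (Multiplicative.ofAdd (1:ℤ))⁻¹) q = sfinv q
  simp only [toAdd_inv, toAdd_ofAdd, zpow_neg, zpow_one]
  rfl

@[simp] lemma φσ_tt (q : Q) : φσ (t * t) q = sf (sf q) := by
  rw [map_mul]
  show (φσ t) ((φσ t) q) = _
  rw [φσ_t, φσ_t]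

lemma mkinv (z : Q) : (⟨z, t⟩ : H)⁻¹ = ⟨sfinv z⁻¹, t⁻¹⟩ := by
  ext
  · rw [SemidirectProduct.inv_left]
    show φσ t⁻¹ z⁻¹ = sfinv z⁻¹
    rw [φσ_tinv]
  · rw [SemidirectProduct.inv_right]

def qv : Fin 4 → Q :=
  ![QuaternionGroup.a 1, QuaternionGroup.xa 0, QuaternionGroup.xa 1, QuaternionGroup.a 0]

def fmap : Fin 4 → H := fun i => ⟨qv i, t⟩

lemma Hrel (a b c : Q) (h : c = a * sf b * (sf a)⁻¹) :
    (⟨a, t⟩ : H) * ⟨b, t⟩ * (⟨a, t⟩ : H)⁻¹ * (⟨c, t⟩ : H)⁻¹ = 1 := by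
  subst h
  have m1 : (⟨a, t⟩ : H) * ⟨b, t⟩ = ⟨a * sf b, t * t⟩ := by
    rw [SemidirectProduct.mul_def]
    simp only [φσ_t]
  have m2 : (⟨a * sf b, t * t⟩ : H) * ⟨sfinv a⁻¹, t⁻¹⟩ = ⟨a * sf b * (sf a)⁻¹, t⟩ := by
    rw [SemidirectProduct.mul_def]
    congr 1
    all_goals try rw [φσ_tt, sf_sfinv, sf_inv]
    all_goals try group
  rw [m1, mkinv, mkinv, m2, SemidirectProduct.mul_def]
  rw [show (1 : H) = (⟨1, 1⟩ : H) from rfl]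
  congr 1
  all_goals try rw [φσ_t, sf_sfinv]
  all_goals group

lemma relcheck : ∀ r ∈ TRels, FreeGroup.lift fmap r = 1 := by
  rintro r ⟨i, j, rfl⟩
  simp only [map_mul, map_inv, FreeGroup.lift_apply_of]
  show fmap i * fmap j * (fmap i)⁻¹ * (fmap (phiA4 i j))⁻¹ = 1
  fin_cases i <;> fin_cases j <;> exact Hrel _ _ _ (by decide)

def fG : G →* H := PresentedGroup.toGroup relcheck

lemma fG_x (i : Fin 4) : fG (x i) = ⟨qv i, t⟩ := PresentedGroup.toGroup.of relcheck

lemma mk_mul_mkinv (a b : Q) :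
    (⟨a, t⟩ : H) * (⟨b, t⟩ : H)⁻¹ = SemidirectProduct.inl (a * b⁻¹) := by
  rw [mkinv, SemidirectProduct.mul_def]
  rw [show (SemidirectProduct.inl (a * b⁻¹) : H) = ⟨a * b⁻¹, 1⟩ from rfl]
  congr 1
  all_goals try rw [φσ_t, sf_sfinv]
  all_goals try group

lemma fI : fG I = SemidirectProduct.inl (QuaternionGroup.a 1) := by
  unfold I
  rw [map_mul, map_inv, fG_x, fG_x]
  show (⟨qv 0, t⟩ : H) * (⟨qv 3, t⟩ : H)⁻¹ = _
  rw [mk_mul_mkinv]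
  congr 1

lemma fJ : fG J = SemidirectProduct.inl (QuaternionGroup.xa 0) := by
  unfold J
  rw [map_mul, map_inv, fG_x, fG_x]
  show (⟨qv 1, t⟩ : H) * (⟨qv 3, t⟩ : H)⁻¹ = _
  rw [mk_mul_mkinv]
  congr 1


lemma Qext {M : Type*} [Monoid M] (f g : Q →* M)
    (h1 : f (QuaternionGroup.a 1) = g (QuaternionGroup.a 1))
    (h2 : f (QuaternionGroup.xa 0) = g (QuaternionGroup.xa 0)) : ∀ q, f q = g q := by
  have ha : ∀ i : ZMod (2 * 2), (QuaternionGroup.a i : Q) = (QuaternionGroup.a 1) ^ i.val := by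
    decide
  have hxa : ∀ i : ZMod (2 * 2),
      (QuaternionGroup.xa i : Q) = QuaternionGroup.xa 0 * QuaternionGroup.a i := by decide
  rintro (i | i)
  · rw [ha i, map_pow, map_pow, h1]
  · rw [hxa i, map_mul, map_mul, h2, ha i, map_pow, map_pow, h1]

lemma gQa1 : gQ (QuaternionGroup.a 1) = I := by
  show I ^ (1 : ZMod (2 * 2)).val = I
  rw [show (1 : ZMod (2 * 2)).val = 1 from rfl, pow_one]

lemma gQxa0 : gQ (QuaternionGroup.xa 0) = J := by
  show J * I ^ (0 : ZMod (2 * 2)).val = J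
  rw [show (0 : ZMod (2 * 2)).val = 0 from rfl, pow_zero, mul_one]

lemma gQxa1 : gQ (QuaternionGroup.xa 1) = J * I := by
  show J * I ^ (1 : ZMod (2 * 2)).val = J * I
  rw [show (1 : ZMod (2 * 2)).val = 1 from rfl, pow_one]

def σhom : Q →* Q where
  toFun := sf
  map_one' := by decide
  map_mul' := sf_hom

lemma conj3 (q : Q) : x 3 * gQ q * (x 3)⁻¹ = gQ (sf q) := by
  have := Qext ((MulAut.conj (x 3)).toMonoidHom.comp gQ) (gQ.comp σhom) ?_ ?_ q
  · exact this
  · show x 3 * gQ (QuaternionGroup.a 1) * (x 3)⁻¹ = gQ (σhom (QuaternionGroup.a 1))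
    rw [gQa1, show σhom (QuaternionGroup.a 1) = QuaternionGroup.xa 0 from by decide, gQxa0]
    exact C1
  · show x 3 * gQ (QuaternionGroup.xa 0) * (x 3)⁻¹ = gQ (σhom (QuaternionGroup.xa 0))
    rw [gQxa0, show σhom (QuaternionGroup.xa 0) = QuaternionGroup.xa 1 from by decide, gQxa1]
    exact C2

lemma conj3' (q : Q) : (x 3)⁻¹ * gQ q * x 3 = gQ (sfinv q) := by
  have h := conj3 (sfinv q)
  rw [sf_sfinv] at h
  rw [← h]
  group

lemma xi_eq : ∀ i : Fin 4, x i = gQ (qv i) * x 3 := by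
  intro i
  fin_cases i
  · show x 0 = gQ (QuaternionGroup.a 1) * x 3
    rw [gQa1]; unfold I; group
  · show x 1 = gQ (QuaternionGroup.xa 0) * x 3
    rw [gQxa0]; unfold J; group
  · show x 2 = gQ (QuaternionGroup.xa 1) * x 3
    rw [gQxa1, K']; group
  · show x 3 = gQ (QuaternionGroup.a 0) * x 3
    rw [show gQ (QuaternionGroup.a 0) = 1 from map_one gQ ▸ (by rw [QuaternionGroup.one_def])]
    group

lemma vmem (i : Fin 4) : x i * (x 3)⁻¹ = gQ (qv i) := by
  rw [xi_eq i]; group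

lemma conjx (i : Fin 4) (q : Q) :
    x i * gQ q * (x i)⁻¹ = gQ (qv i * sf q * (qv i)⁻¹) := by
  rw [xi_eq i, map_mul, map_mul, map_inv, ← conj3 q]
  group

lemma conjxInv (i : Fin 4) (q : Q) :
    (x i)⁻¹ * gQ q * x i = gQ (sfinv ((qv i)⁻¹ * q * qv i)) := by
  rw [← conj3' ((qv i)⁻¹ * q * qv i), xi_eq i, map_mul, map_mul, map_inv]
  group

lemma Icomm : I = ⁅x 1, x 3⁆ := by
  rw [commutatorElement_def]
  have h := xswap 1 3 0 (by decide)
  unfold I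
  calc x 0 * (x 3)⁻¹ = ((x 0 * x 1) * (x 1)⁻¹) * (x 3)⁻¹ := by group
    _ = ((x 1 * x 3) * (x 1)⁻¹) * (x 3)⁻¹ := by rw [← h]
    _ = x 1 * x 3 * (x 1)⁻¹ * (x 3)⁻¹ := by group

lemma Jcomm : J = ⁅x 2, x 3⁆ := by
  rw [commutatorElement_def]
  have h := xswap 2 3 1 (by decide)
  unfold J
  calc x 1 * (x 3)⁻¹ = ((x 1 * x 2) * (x 2)⁻¹) * (x 3)⁻¹ := by group
    _ = ((x 2 * x 3) * (x 2)⁻¹) * (x 3)⁻¹ := by rw [← h]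
    _ = x 2 * x 3 * (x 2)⁻¹ * (x 3)⁻¹ := by group

lemma commxx (i j : Fin 4) : ⁅x i, x j⁆ = gQ (qv (phiA4 i j) * (qv j)⁻¹) := by
  rw [map_mul, map_inv, ← vmem, ← vmem, commutatorElement_def]
  have h := xswap i j (phiA4 i j) rfl
  calc x i * x j * (x i)⁻¹ * (x j)⁻¹
      = (x i * x j) * ((x i)⁻¹ * (x j)⁻¹) := by group
    _ = (x (phiA4 i j) * x i) * ((x i)⁻¹ * (x j)⁻¹) := by rw [h]
    _ = x (phiA4 i j) * (x 3)⁻¹ * (x j * (x 3)⁻¹)⁻¹ := by group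


abbrev P : Type := Multiplicative ℤ × PresentedGroup TRels

def e1 : Multiplicative ℤ →* P := MonoidHom.inl _ _
def e2 : G →* P := MonoidHom.inr _ _
def fT : P →* H := fG.comp (MonoidHom.snd _ _)
def ρ : P →* Multiplicative ℤ := SemidirectProduct.rightHom.comp fT
def gT : Q →* P := e2.comp gQ

lemma right_one {c : P} (hc : c ∈ commutator P) : (fT c).right = 1 :=
  MonoidHom.mem_ker.mp (Abelianization.commutator_subset_ker ρ hc)

def F : ↥(commutator P) →* Q where
  toFun c := (fT c.1).left
  map_one' := by
    show (fT 1).left = 1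
    rw [map_one]
    rfl
  map_mul' c d := by
    show (fT (c.1 * d.1)).left = (fT c.1).left * (fT d.1).left
    rw [map_mul, SemidirectProduct.mul_left, right_one c.2, map_one]
    rfl

lemma memI : e2 I ∈ commutator P := by
  rw [commutator_def]
  have h : ⁅e2 (x 1), e2 (x 3)⁆ ∈ ⁅(⊤ : Subgroup P), ⊤⁆ :=
    Subgroup.commutator_mem_commutator (Subgroup.mem_top _) (Subgroup.mem_top _)
  rwa [← map_commutatorElement, ← Icomm] at h

lemma memJ : e2 J ∈ commutator P := by
  rw [commutator_def]
  have h : ⁅e2 (x 2), e2 (x 3)⁆ ∈ ⁅(⊤ : Subgroup P), ⊤⁆ :=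
    Subgroup.commutator_mem_commutator (Subgroup.mem_top _) (Subgroup.mem_top _)
  rwa [← map_commutatorElement, ← Jcomm] at h

lemma memQ : ∀ q : Q, gT q ∈ commutator P := by
  rintro (i | i)
  · show e2 (I ^ i.val) ∈ commutator P
    rw [map_pow]
    exact pow_mem memI _
  · show e2 (J * I ^ i.val) ∈ commutator P
    rw [map_mul, map_pow]
    exact mul_mem memJ (pow_mem memI _)

def gQ' : Q →* ↥(commutator P) := gT.codRestrict _ memQ

lemma fTgT : ∀ q : Q, fT (gT q) = SemidirectProduct.inl q := by
  intro q
  have h := Qext (fT.comp gT) SemidirectProduct.inl ?_ ?_ q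
  · simpa using h
  · show fG (gQ (QuaternionGroup.a 1)) = SemidirectProduct.inl (QuaternionGroup.a 1)
    rw [gQa1, fI]
  · show fG (gQ (QuaternionGroup.xa 0)) = SemidirectProduct.inl (QuaternionGroup.xa 0)
    rw [gQxa0, fJ]

lemma F_gQ' (q : Q) : F (gQ' q) = q := by
  show (fT (gT q)).left = q
  rw [fTgT]
  rfl

def genS : Set P := Set.range (fun i => e2 (x i)) ∪ {e1 (Multiplicative.ofAdd 1)}

lemma e1e2comm (m : Multiplicative ℤ) (w : G) : e1 m * e2 w = e2 w * e1 m := by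
  show MonoidHom.inl _ _ m * MonoidHom.inr _ _ w = MonoidHom.inr _ _ w * MonoidHom.inl _ _ m
  rw [MonoidHom.inl_apply, MonoidHom.inr_apply, Prod.mk_mul_mk, Prod.mk_mul_mk]
  rw [one_mul, mul_one, one_mul, mul_one]

lemma genTop : Subgroup.closure genS = ⊤ := by
  rw [eq_top_iff]
  rintro ⟨m, g⟩ -
  have hz : e1 m ∈ Subgroup.closure genS := by
    have h1 : e1 (Multiplicative.ofAdd 1) ∈ Subgroup.closure genS :=
      Subgroup.subset_closure (Or.inr rfl)
    have h2 : e1 m = (e1 (Multiplicative.ofAdd 1)) ^ (Multiplicative.toAdd m) := by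
      rw [← map_zpow]
      congr 1
      rw [← ofAdd_zsmul, smul_eq_mul, mul_one, ofAdd_toAdd]
    rw [h2]
    exact zpow_mem h1 _
  have hg2 : e2 g ∈ Subgroup.closure genS := by
    have hsub : ∀ i : Fin 4, (PresentedGroup.of i : G) ∈ (Subgroup.closure genS).comap e2 :=
      fun i => Subgroup.mem_comap.mpr (Subgroup.subset_closure (Or.inl ⟨i, rfl⟩))
    exact Subgroup.mem_comap.mp (PresentedGroup.generated_by TRels _ hsub g)
  have hsplit : (⟨m, g⟩ : P) = e1 m * e2 g := by
    show (m, g) = (m, 1) * (1, g)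
    rw [Prod.mk_mul_mk, mul_one, one_mul]
  rw [hsplit]
  exact mul_mem hz hg2

def Sconj : Subgroup P where
  carrier := {p : P |
    ∀ q : Q, (∃ q', p * gT q * p⁻¹ = gT q') ∧ (∃ q', p⁻¹ * gT q * p = gT q')}
  one_mem' := by
    intro q
    exact ⟨⟨q, by group⟩, ⟨q, by group⟩⟩
  mul_mem' := by
    intro p1 p2 h1 h2
    intro q
    constructor
    · obtain ⟨q2, hb⟩ := (h2 q).1
      obtain ⟨q1, ha⟩ := (h1 q2).1
      exact ⟨q1, by rw [← ha, ← hb]; group⟩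
    · obtain ⟨q1, ha⟩ := (h1 q).2
      obtain ⟨q2, hb⟩ := (h2 q1).2
      exact ⟨q2, by rw [← hb, ← ha]; group⟩
  inv_mem' := by
    intro p hp q
    constructor
    · obtain ⟨q', h⟩ := (hp q).2
      exact ⟨q', by rw [← h]; group⟩
    · obtain ⟨q', h⟩ := (hp q).1
      exact ⟨q', by rw [← h]; group⟩

lemma genS_sub_Sconj : genS ⊆ ↑Sconj := by
  rintro p (⟨i, rfl⟩ | rfl)
  · intro q
    constructor
    · refine ⟨qv i * sf q * (qv i)⁻¹, ?_⟩
      show e2 (x i) * e2 (gQ q) * (e2 (x i))⁻¹ = e2 (gQ _)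
      rw [← map_inv, ← map_mul, ← map_mul, conjx]
    · refine ⟨sfinv ((qv i)⁻¹ * q * qv i), ?_⟩
      show (e2 (x i))⁻¹ * e2 (gQ q) * e2 (x i) = e2 (gQ _)
      rw [← map_inv, ← map_mul, ← map_mul, conjxInv]
  · intro q
    have hc : e1 (Multiplicative.ofAdd 1) * gT q = gT q * e1 (Multiplicative.ofAdd 1) :=
      e1e2comm _ (gQ q)
    constructor
    · exact ⟨q, by rw [hc]; group⟩
    · refine ⟨q, ?_⟩
      have hcc : Commute (e1 (Multiplicative.ofAdd 1)) (gT q) := hc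
      rw [hcc.inv_left.eq]
      group

instance Nnormal : (gT.range).Normal := by
  constructor
  intro n hn g
  obtain ⟨q, rfl⟩ := hn
  have hg : g ∈ Sconj := by
    have hle : (⊤ : Subgroup P) ≤ Sconj := by
      rw [← genTop]
      exact (Subgroup.closure_le _).mpr genS_sub_Sconj
    exact hle trivial
  obtain ⟨q', hq⟩ := (hg q).1
  exact ⟨q', hq.symm⟩

lemma commLE : commutator P ≤ gT.range := by
  haveI := Nnormal
  set π := QuotientGroup.mk' gT.range with hπ
  have base : ∀ u ∈ π '' genS, ∀ v ∈ π '' genS, Commute u v := by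
    rintro u ⟨s, hs, rfl⟩ v ⟨s', hs', rfl⟩
    have key : ∀ i j : Fin 4, Commute (π (e2 (x i))) (π (e2 (x j))) := by
      intro i j
      rw [← commutatorElement_eq_one_iff_commute, ← map_commutatorElement]
      refine (QuotientGroup.eq_one_iff _).mpr ?_
      rw [← map_commutatorElement, commxx]
      exact ⟨_, rfl⟩
    have zkey : ∀ p : P, Commute (e1 (Multiplicative.ofAdd 1)) p := by
      rintro ⟨m, g⟩
      show (Multiplicative.ofAdd 1, (1 : G)) * (m, g) = (m, g) * (Multiplicative.ofAdd 1, (1 : G))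
      rw [Prod.mk_mul_mk, Prod.mk_mul_mk, mul_comm, one_mul, mul_one]
    rcases hs with ⟨i, rfl⟩ | rfl <;> rcases hs' with ⟨j, rfl⟩ | rfl
    · exact key i j
    · exact ((zkey _).map π).symm
    · exact (zkey _).map π
    · exact Commute.refl _
  have hcomm : ∀ p q' : P, Commute (π p) (π q') := by
    intro p q'
    have hp : π p ∈ Subgroup.closure (π '' genS) := by
      rw [← MonoidHom.map_closure, genTop]
      exact ⟨p, trivial, rfl⟩
    have hq : π q' ∈ Subgroup.closure (π '' genS) := by
      rw [← MonoidHom.map_closure, genTop]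
      exact ⟨q', trivial, rfl⟩
    exact Subgroup.closure_induction₂ (p := fun u v _ _ => Commute u v)
      (fun u v hu hv => base u hu v hv)
      (fun y _ => Commute.one_left y) (fun y _ => Commute.one_right y)
      (fun _ _ _ _ _ _ h1 h2 => h1.mul_left h2)
      (fun _ _ _ _ _ _ h1 h2 => h1.mul_right h2)
      (fun _ _ _ _ h => h.inv_left) (fun _ _ _ _ h => h.inv_right) hp hq
  rw [commutator_def, Subgroup.commutator_le]
  intro g1 _ g2 _
  refine (QuotientGroup.eq_one_iff _).mp ?_
  have h := commutatorElement_eq_one_iff_commute.mpr (hcomm g1 g2)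
  rw [← map_commutatorElement] at h
  exact h

lemma gQ'_surj : Function.Surjective gQ' := by
  rintro ⟨c, hc⟩
  obtain ⟨q, hq⟩ := commLE hc
  exact ⟨q, Subtype.ext hq⟩

noncomputable def finalEquiv : ↥(commutator P) ≃* Q := by
  refine MulEquiv.ofBijective F ⟨?_, ?_⟩
  · intro c d h
    obtain ⟨qc, rfl⟩ := gQ'_surj c
    obtain ⟨qd, rfl⟩ := gQ'_surj d
    rw [F_gQ', F_gQ'] at h
    rw [h]
  · intro q
    exact ⟨gQ' q, F_gQ' q⟩

end Aux19

theorem stmt19 : Nonempty ((commutator TGroup) ≃* QuaternionGroup 2) := by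
  exact ⟨Aux19.finalEquiv⟩
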